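/- For any fixed compatibility scenarios Υ_in and Υ_out, the set NCW(Υ_in → Υ_out) is a convex polytope: there are finitely many deterministic noncontextual wirings W_1, …, W_N ∈ NCW(Υ_in → Υ_out) such that a map T on behaviors belongs to NCW(Υ_in → Υ_out) if and only if there exist weights c_1, …, c_N ≥ 0 with Σ_j c_j = 1 and T(B) = Σ_j c_j W_j(B) (contextwise) for every nondisturbing behavior B on Υ_in. -/

import Mathlib

noncomputable section

/-- A compatibility scenario: a finite set of measurements `M`, finite nonempty
outcome sets `O x` for each measurement, and an antichain `C` of maximal contexts. -/
structure Scenario where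
  M : Type
  [fintypeM : Fintype M]
  [decEqM : DecidableEq M]
  O : M → Type
  [fintypeO : ∀ x, Fintype (O x)]
  [decEqO : ∀ x, DecidableEq (O x)]
  [nonemptyO : ∀ x, Nonempty (O x)]
  C : Finset (Finset M)
  antichain : ∀ γ ∈ C, ∀ γ' ∈ C, γ ⊆ γ' → γ = γ'

attribute [instance] Scenario.fintypeM Scenario.decEqM Scenario.fintypeO
  Scenario.decEqO Scenario.nonemptyO

/-- The elements of a set of measurements, as a type. -/
def Scenario.El (S : Scenario) (γ : Finset S.M) : Type := {x : S.M // x ∈ γ}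

instance (S : Scenario) (γ : Finset S.M) : Fintype (S.El γ) :=
  show Fintype {x : S.M // x ∈ γ} from inferInstance

instance (S : Scenario) (γ : Finset S.M) : DecidableEq (S.El γ) :=
  show DecidableEq {x : S.M // x ∈ γ} from inferInstance

/-- Joint outcomes `O^γ` of a set of measurements `γ`. -/
def Scenario.JO (S : Scenario) (γ : Finset S.M) : Type := (x : S.El γ) → S.O x.1

instance (S : Scenario) (γ : Finset S.M) : Fintype (S.JO γ) :=
  show Fintype ((x : S.El γ) → S.O x.1) from inferInstance

instance (S : Scenario) (γ : Finset S.M) : DecidableEq (S.JO γ) :=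
  show DecidableEq ((x : S.El γ) → S.O x.1) from inferInstance

instance (S : Scenario) (γ : Finset S.M) : Nonempty (S.JO γ) :=
  ⟨fun _ => Classical.arbitrary _⟩

/-- Global outcome assignments `O^M`. -/
abbrev Scenario.Glob (S : Scenario) : Type := (x : S.M) → S.O x

/-- Restriction of a global assignment to a set of measurements. -/
def Scenario.restr (S : Scenario) (γ : Finset S.M) (o : S.Glob) : S.JO γ :=
  fun x => o x.1

/-- The (maximal) contexts of a scenario. -/
def Scenario.Ctx (S : Scenario) : Type := {γ : Finset S.M // γ ∈ S.C}

instance (S : Scenario) : Fintype S.Ctx :=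
  show Fintype {γ : Finset S.M // γ ∈ S.C} from inferInstance

instance (S : Scenario) : DecidableEq S.Ctx :=
  show DecidableEq {γ : Finset S.M // γ ∈ S.C} from inferInstance

/-- A behavior (box): a family of real-valued functions, one for each maximal context. -/
def Behavior (S : Scenario) : Type := (γ : S.Ctx) → S.JO γ.1 → ℝ

/-- The family forms a probability distribution on each maximal context. -/
def IsProb (S : Scenario) (B : Behavior S) : Prop :=
  ∀ γ : S.Ctx, (∀ t, 0 ≤ B γ t) ∧ (∑ t, B γ t = 1)

/-- Kochen–Specker noncontextuality: existence of a global section, i.e. a probability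
distribution on `O^M` whose marginal on each maximal context equals the behavior. -/
def IsNC (S : Scenario) (B : Behavior S) : Prop :=
  ∃ pM : S.Glob → ℝ, (∀ o, 0 ≤ pM o) ∧ (∑ o, pM o = 1) ∧
    ∀ (γ : S.Ctx) (t : S.JO γ.1),
      B γ t = ∑ o : S.Glob, if S.restr γ.1 o = t then pM o else 0

/-- Restriction between nested sets of measurements. -/
def Scenario.restr2 (S : Scenario) {γ δ : Finset S.M} (h : δ ⊆ γ) (t : S.JO γ) :
    S.JO δ := fun x => t ⟨x.1, h x.2⟩

/-- The no-disturbance condition: marginals agree on intersections of contexts. -/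
def IsND (S : Scenario) (B : Behavior S) : Prop :=
  ∀ γ γ' : S.Ctx, ∀ u : S.JO (γ.1 ∩ γ'.1),
    (∑ t : S.JO γ.1, if S.restr2 Finset.inter_subset_left t = u then B γ t else 0) =
      (∑ t : S.JO γ'.1, if S.restr2 Finset.inter_subset_right t = u then B γ' t else 0)

/-- Factorizability: a noncontextual (hidden-variable) factorizable model. -/
def IsFactorizable (S : Scenario) (B : Behavior S) : Prop :=
  ∃ (k : ℕ) (q : Fin k → ℝ) (e : (x : S.M) → Fin k → S.O x → ℝ),
    (∀ l, 0 ≤ q l) ∧ (∑ l, q l = 1) ∧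
    (∀ x l, (∀ o, 0 ≤ e x l o) ∧ (∑ o, e x l o = 1)) ∧
    ∀ (γ : S.Ctx) (t : S.JO γ.1),
      B γ t = ∑ l, q l * ∏ x : S.El γ.1, e x.1 l (t x)

/-- The deterministic behavior induced by a global outcome assignment. -/
def detB (S : Scenario) (o : S.Glob) : Behavior S :=
  fun γ t => if S.restr γ.1 o = t then 1 else 0
/-- A noncontextual wiring with input scenario `S`, whose output scenario has the
measurements, maximal contexts and outcome sets of `T`.  It consists of a
noncontextual pre-processing behavior (given by its global section `pPre` on the
pre-processing outcome sets `OPre`), a function `f` selecting, from each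
pre-processing context `β` and joint outcome `r`, a context of the input scenario,
a coordinatewise wiring `wmap` feeding every output measurement slot from a single
input measurement, and adaptively chosen noncontextual (factorizable)
post-processing boxes given by a hidden variable `φ` with distribution `q β r`
and response functions `resp`. -/
structure Wiring (S T : Scenario) where
  OPre : T.M → Type
  [fintypeOPre : ∀ m, Fintype (OPre m)]
  [decEqOPre : ∀ m, DecidableEq (OPre m)]
  [nonemptyOPre : ∀ m, Nonempty (OPre m)]
  pPre : ((x : T.M) → OPre x) → ℝ
  pPre_nonneg : ∀ o, 0 ≤ pPre o
  pPre_sum : ∑ o, pPre o = 1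
  f : (β : T.Ctx) → ((x : T.El β.1) → OPre x.1) → S.Ctx
  wmap : (β : T.Ctx) → (r : (x : T.El β.1) → OPre x.1) → T.El β.1 → S.El (f β r).1
  nPhi : (β : T.Ctx) → ((x : T.El β.1) → OPre x.1) → ℕ
  q : (β : T.Ctx) → (r : (x : T.El β.1) → OPre x.1) → Fin (nPhi β r) → ℝ
  q_nonneg : ∀ β r φ, 0 ≤ q β r φ
  q_sum : ∀ β r, ∑ φ, q β r φ = 1
  resp : (β : T.Ctx) → (r : (x : T.El β.1) → OPre x.1) → (m : T.El β.1) →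
    Fin (nPhi β r) → S.O (wmap β r m).1 → T.O m.1 → ℝ
  resp_nonneg : ∀ β r m φ o u, 0 ≤ resp β r m φ o u
  resp_sum : ∀ β r m φ o, ∑ u, resp β r m φ o u = 1

attribute [instance] Wiring.fintypeOPre Wiring.decEqOPre Wiring.nonemptyOPre

/-- Marginal of the pre-processing behavior on a pre-processing context. -/
def Wiring.preB {S T : Scenario} (W : Wiring S T) (β : T.Ctx)
    (r : (x : T.El β.1) → W.OPre x.1) : ℝ :=
  ∑ o : (x : T.M) → W.OPre x,
    if (fun x : T.El β.1 => o x.1) = r then W.pPre o else 0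

/-- The wired behavior `W(B)` on the output scenario. -/
def Wiring.apply {S T : Scenario} (W : Wiring S T) (B : Behavior S) : Behavior T :=
  fun β t =>
    ∑ r : (x : T.El β.1) → W.OPre x.1,
      ∑ s : S.JO (W.f β r).1,
        W.preB β r * B (W.f β r) s *
          ∑ φ : Fin (W.nPhi β r),
            W.q β r φ * ∏ m : T.El β.1, W.resp β r m φ (s (W.wmap β r m)) (t m)

/-- Free convertibility of behaviors on a scenario by noncontextual wirings (whose
output scenario has the same maximal contexts and context-outcome sets). -/
def Arrow (S : Scenario) (B B' : Behavior S) : Prop :=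
  ∃ W : Wiring S S, W.apply B = B'
/-- A noncontextual wiring is deterministic if its pre-processing behavior and all its
post-processing behaviors are deterministic: the global section of the pre-processing
behavior is `{0,1}`-valued, the post-processing boxes have a single hidden-variable
value, and their response functions are `{0,1}`-valued. -/
def Wiring.IsDeterministic {S T : Scenario} (W : Wiring S T) : Prop :=
  (∀ o, W.pPre o = 0 ∨ W.pPre o = 1) ∧
  (∀ β r, W.nPhi β r = 1) ∧
  (∀ β r m φ o u, W.resp β r m φ o u = 0 ∨ W.resp β r m φ o u = 1)

namespace Statement11

open Finset

lemma pi_sum_prod {ι : Type} [Fintype ι] [DecidableEq ι] {κ : ι → Type}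
    [∀ i, Fintype (κ i)] (f : ∀ i, κ i → ℝ) :
    ∑ g : ∀ i, κ i, ∏ i, f i (g i) = ∏ i, ∑ j, f i j :=
  (Fintype.prod_sum f).symm

lemma ite_sum_zero {P : Prop} [Decidable P] {ι : Type} [Fintype ι] (f : ι → ℝ) :
    (if P then ∑ j, f j else 0) = ∑ j, if P then f j else 0 := by
  split <;> simp

/-- Summing a `{0,1}`-weighted product over all functions picks out a single response. -/
lemma single_fun_sum {α β' : Type} [Fintype α] [DecidableEq α] [Fintype β'] [DecidableEq β']
    (p : α → β' → ℝ) (hp : ∀ a, ∑ b, p a b = 1) (a₀ : α) (b₀ : β') :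
    ∑ g : α → β', (∏ a, p a (g a)) * (if g a₀ = b₀ then (1:ℝ) else 0) = p a₀ b₀ := by
  have h1 : ∀ g : α → β', (∏ a, p a (g a)) * (if g a₀ = b₀ then (1:ℝ) else 0)
      = ∏ a, (p a (g a) * if a = a₀ then (if g a = b₀ then (1:ℝ) else 0) else 1) := by
    intro g
    rw [Finset.prod_mul_distrib]
    congr 1
    rw [Finset.prod_ite_eq' Finset.univ a₀ (fun a => if g a = b₀ then (1:ℝ) else 0)]
    simp
  calc ∑ g : α → β', (∏ a, p a (g a)) * (if g a₀ = b₀ then (1:ℝ) else 0)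
      = ∑ g : α → β', ∏ a, (p a (g a) * if a = a₀ then (if g a = b₀ then (1:ℝ) else 0) else 1) := by
        exact Finset.sum_congr rfl fun g _ => h1 g
    _ = ∏ a, ∑ b, (p a b * if a = a₀ then (if b = b₀ then (1:ℝ) else 0) else 1) :=
        pi_sum_prod (fun a x => p a x * if a = a₀ then (if x = b₀ then (1:ℝ) else 0) else 1)
    _ = ∏ a, (if a = a₀ then p a₀ b₀ else 1) := by
        refine Finset.prod_congr rfl fun a _ => ?_
        by_cases h : a = a₀
        · subst h
          simp [mul_ite, mul_one, mul_zero]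
        · simp [h, hp a]
    _ = p a₀ b₀ := by
        rw [Finset.prod_ite_eq' Finset.univ a₀ (fun _ => p a₀ b₀)]
        simp

variable (S T : Scenario)

/-- The data of a deterministic wiring at one output context: an input context,
a coordinatewise map of measurements, and deterministic response functions. -/
abbrev EType (β : T.Ctx) : Type :=
  Σ γ : S.Ctx, Σ w : T.El β.1 → S.El γ.1, (m : T.El β.1) → S.O (w m).1 → T.O m.1

/-- The data of a deterministic wiring. -/
abbrev DType : Type := (β : T.Ctx) → EType S T β

/-- The deterministic wiring associated to data `d`. -/
def detW (d : DType S T) : Wiring S T where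
  OPre _ := PUnit
  pPre _ := 1
  pPre_nonneg _ := zero_le_one
  pPre_sum := by simp
  f β _ := (d β).1
  wmap β _ m := (d β).2.1 m
  nPhi _ _ := 1
  q _ _ _ := 1
  q_nonneg _ _ _ := zero_le_one
  q_sum _ _ := by simp
  resp β r m _ o u := if (d β).2.2 m o = u then 1 else 0
  resp_nonneg := by intros; split <;> norm_num
  resp_sum := by intros; simp

lemma detW_isDet (d : DType S T) : (detW S T d).IsDeterministic :=
  ⟨fun _ => Or.inr rfl, fun _ _ => rfl, fun β r m φ o u => by
    simp only [detW]; split <;> [right; left] <;> rfl⟩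

/-- The behavior of a deterministic wiring at one context, as a function of the data. -/
def Afun (B : Behavior S) (β : T.Ctx) (t : T.JO β.1) (e : EType S T β) : ℝ :=
  ∑ s : S.JO e.1.1, B e.1 s *
    ∏ m : T.El β.1, (if e.2.2 m (s (e.2.1 m)) = t m then (1:ℝ) else 0)

lemma detW_apply (d : DType S T) (B : Behavior S) (β : T.Ctx) (t : T.JO β.1) :
    (detW S T d).apply B β t = Afun S T B β t (d β) := by
  have hpre : ∀ r, (detW S T d).preB β r = 1 := by
    intro r
    unfold Wiring.preB
    rw [Finset.sum_congr rfl (fun o _ =>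
      if_pos (show (fun x : T.El β.1 => o x.1) = r from funext fun _ => rfl))]
    exact (detW S T d).pPre_sum
  simp only [Wiring.apply, hpre, one_mul]
  simp only [detW, Afun, Finset.univ_unique, Finset.sum_singleton, Fin.sum_univ_one, one_mul]
  exact (Fintype.sum_unique (ι := (x : T.El β.1) → PUnit) _).trans
    (Finset.sum_congr rfl fun s _ => by erw [Fin.sum_univ_one])

/-- Restriction of a global pre-processing outcome to a context. -/
def ro (W : Wiring S T) (β : T.Ctx) (o : (x : T.M) → W.OPre x) :
    (x : T.El β.1) → W.OPre x.1 := fun x => o x.1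

/-- The probability that the wiring `W`, given global pre-outcome `o`, realizes the
deterministic local data `e` at context `β`. -/
def Qfun (W : Wiring S T) (β : T.Ctx) (o : (x : T.M) → W.OPre x) (e : EType S T β) : ℝ :=
  ∑ φ : Fin (W.nPhi β (ro S T W β o)),
    W.q β (ro S T W β o) φ *
      ∑ g : (m : T.El β.1) → S.O (W.wmap β (ro S T W β o) m).1 → T.O m.1,
        (if e = ⟨W.f β (ro S T W β o), W.wmap β (ro S T W β o), g⟩ then (1:ℝ) else 0) *
          ∏ m : T.El β.1, ∏ o' : S.O (W.wmap β (ro S T W β o) m).1,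
            W.resp β (ro S T W β o) m φ o' (g m o')

lemma Qfun_nonneg (W : Wiring S T) (β : T.Ctx) (o : (x : T.M) → W.OPre x)
    (e : EType S T β) : 0 ≤ Qfun S T W β o e := by
  refine Finset.sum_nonneg fun φ _ => mul_nonneg (W.q_nonneg _ _ _) ?_
  refine Finset.sum_nonneg fun g _ => mul_nonneg (by positivity) ?_
  exact Finset.prod_nonneg fun m _ => Finset.prod_nonneg fun o' _ => W.resp_nonneg _ _ _ _ _ _

lemma Qfun_mul_sum (W : Wiring S T) (β : T.Ctx) (o : (x : T.M) → W.OPre x)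
    (A : EType S T β → ℝ) :
    ∑ e : EType S T β, Qfun S T W β o e * A e =
      ∑ φ : Fin (W.nPhi β (ro S T W β o)),
        W.q β (ro S T W β o) φ *
          ∑ g : (m : T.El β.1) → S.O (W.wmap β (ro S T W β o) m).1 → T.O m.1,
            (∏ m : T.El β.1, ∏ o' : S.O (W.wmap β (ro S T W β o) m).1,
              W.resp β (ro S T W β o) m φ o' (g m o')) *
            A ⟨W.f β (ro S T W β o), W.wmap β (ro S T W β o), g⟩ := by
  unfold Qfun
  simp only [Finset.sum_mul, mul_assoc]
  rw [Finset.sum_comm]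
  refine Finset.sum_congr rfl fun φ _ => ?_
  rw [← Finset.mul_sum]
  congr 1
  rw [Finset.sum_comm]
  refine Finset.sum_congr rfl fun g _ => ?_
  simp only [ite_mul, one_mul, zero_mul]
  rw [Finset.sum_ite_eq' Finset.univ
    (⟨W.f β (ro S T W β o), W.wmap β (ro S T W β o), g⟩ : EType S T β)]
  simp [mul_assoc]

set_option maxHeartbeats 1600000 in
lemma double_pi_sum {ι : Type} [Fintype ι] [DecidableEq ι] {κ μ : ι → Type}
    [∀ i, Fintype (κ i)] [∀ i, DecidableEq (κ i)] [∀ i, Fintype (μ i)]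
    (p : (i : ι) → κ i → μ i → ℝ) (hp : ∀ i a, ∑ b, p i a b = 1) :
    ∑ g : (i : ι) → κ i → μ i, ∏ i, ∏ a, p i a (g i a) = 1 := by
  have h1 : ∑ g : (i : ι) → κ i → μ i, ∏ i, ∏ a, p i a (g i a)
      = ∏ i, ∑ gi : κ i → μ i, ∏ a, p i a (gi a) :=
    pi_sum_prod (κ := fun i => κ i → μ i) (fun i gi => ∏ a, p i a (gi a))
  rw [h1]
  have h2 : ∀ i, (∑ gi : κ i → μ i, ∏ a, p i a (gi a)) = ∏ a, ∑ b, p i a b :=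
    fun i => pi_sum_prod (κ := fun _ : κ i => μ i) (fun a b => p i a b)
  rw [Finset.prod_congr rfl (fun i _ => h2 i)]
  simp [hp]

lemma Qfun_sum (W : Wiring S T) (β : T.Ctx) (o : (x : T.M) → W.OPre x) :
    ∑ e : EType S T β, Qfun S T W β o e = 1 := by
  have h := Qfun_mul_sum S T W β o (fun _ => 1)
  simp only [mul_one] at h
  rw [h]
  have hg : ∀ φ : Fin (W.nPhi β (ro S T W β o)),
      ∑ g : (m : T.El β.1) → S.O (W.wmap β (ro S T W β o) m).1 → T.O m.1,
        ∏ m : T.El β.1, ∏ o' : S.O (W.wmap β (ro S T W β o) m).1,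
          W.resp β (ro S T W β o) m φ o' (g m o') = 1 :=
    fun φ => double_pi_sum (fun m o' u => W.resp β (ro S T W β o) m φ o' u)
      (fun m o' => W.resp_sum β (ro S T W β o) m φ o')
  rw [Finset.sum_congr rfl (fun φ _ => by rw [hg φ, mul_one])]
  exact W.q_sum β _


lemma swap_mul_sum {ι κ : Type} [Fintype ι] [Fintype κ] (a : ι → ℝ) (b : κ → ℝ)
    (c : ι → κ → ℝ) :
    ∑ i, a i * ∑ k, b k * c i k = ∑ k, b k * ∑ i, a i * c i k := by
  simp only [Finset.mul_sum]
  rw [Finset.sum_comm]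
  exact Finset.sum_congr rfl fun k _ => Finset.sum_congr rfl fun i _ => by ring

lemma QA (W : Wiring S T) (B : Behavior S) (β : T.Ctx) (t : T.JO β.1)
    (o : (x : T.M) → W.OPre x) :
    ∑ e : EType S T β, Qfun S T W β o e * Afun S T B β t e
      = ∑ s : S.JO (W.f β (ro S T W β o)).1, B (W.f β (ro S T W β o)) s *
          ∑ φ : Fin (W.nPhi β (ro S T W β o)), W.q β (ro S T W β o) φ *
            ∏ m : T.El β.1,
              W.resp β (ro S T W β o) m φ (s (W.wmap β (ro S T W β o) m)) (t m) := by
  rw [Qfun_mul_sum S T W β o (Afun S T B β t)]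
  simp only [Afun]
  have hg : ∀ (φ : Fin (W.nPhi β (ro S T W β o))) (s : S.JO (W.f β (ro S T W β o)).1),
      ∑ g : (m : T.El β.1) → S.O (W.wmap β (ro S T W β o) m).1 → T.O m.1,
        (∏ m : T.El β.1, ∏ o' : S.O (W.wmap β (ro S T W β o) m).1,
          W.resp β (ro S T W β o) m φ o' (g m o')) *
        ∏ m : T.El β.1,
          (if g m (s (W.wmap β (ro S T W β o) m)) = t m then (1:ℝ) else 0)
      = ∏ m : T.El β.1,
          W.resp β (ro S T W β o) m φ (s (W.wmap β (ro S T W β o) m)) (t m) := by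
    intro φ s
    have h1 : ∀ g : (m : T.El β.1) → S.O (W.wmap β (ro S T W β o) m).1 → T.O m.1,
        (∏ m : T.El β.1, ∏ o' : S.O (W.wmap β (ro S T W β o) m).1,
          W.resp β (ro S T W β o) m φ o' (g m o')) *
        ∏ m : T.El β.1,
          (if g m (s (W.wmap β (ro S T W β o) m)) = t m then (1:ℝ) else 0)
        = ∏ m : T.El β.1,
            ((∏ o' : S.O (W.wmap β (ro S T W β o) m).1,
              W.resp β (ro S T W β o) m φ o' (g m o')) *
             (if g m (s (W.wmap β (ro S T W β o) m)) = t m then (1:ℝ) else 0)) :=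
      fun g => (Finset.prod_mul_distrib).symm
    rw [Finset.sum_congr rfl fun g _ => h1 g]
    have h2 : ∑ g : (m : T.El β.1) → S.O (W.wmap β (ro S T W β o) m).1 → T.O m.1,
        ∏ m : T.El β.1,
          ((∏ o' : S.O (W.wmap β (ro S T W β o) m).1,
            W.resp β (ro S T W β o) m φ o' (g m o')) *
           (if g m (s (W.wmap β (ro S T W β o) m)) = t m then (1:ℝ) else 0))
        = ∏ m : T.El β.1, ∑ gm : S.O (W.wmap β (ro S T W β o) m).1 → T.O m.1,
            ((∏ o' : S.O (W.wmap β (ro S T W β o) m).1,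
              W.resp β (ro S T W β o) m φ o' (gm o')) *
             (if gm (s (W.wmap β (ro S T W β o) m)) = t m then (1:ℝ) else 0)) :=
      pi_sum_prod (κ := fun m : T.El β.1 => S.O (W.wmap β (ro S T W β o) m).1 → T.O m.1)
        (fun m gm => (∏ o' : S.O (W.wmap β (ro S T W β o) m).1,
            W.resp β (ro S T W β o) m φ o' (gm o')) *
          (if gm (s (W.wmap β (ro S T W β o) m)) = t m then (1:ℝ) else 0))
    rw [h2]
    exact Finset.prod_congr rfl fun m _ =>
      single_fun_sum (fun o' u => W.resp β (ro S T W β o) m φ o' u)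
        (fun o' => W.resp_sum β (ro S T W β o) m φ o')
        (s (W.wmap β (ro S T W β o) m)) (t m)
  have hswap1 : ∀ φ : Fin (W.nPhi β (ro S T W β o)),
      ∑ g : (m : T.El β.1) → S.O (W.wmap β (ro S T W β o) m).1 → T.O m.1,
        (∏ m : T.El β.1, ∏ o' : S.O (W.wmap β (ro S T W β o) m).1,
          W.resp β (ro S T W β o) m φ o' (g m o')) *
        ∑ s : S.JO (W.f β (ro S T W β o)).1, B (W.f β (ro S T W β o)) s *
          ∏ m : T.El β.1,
            (if g m (s (W.wmap β (ro S T W β o) m)) = t m then (1:ℝ) else 0)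
      = ∑ s : S.JO (W.f β (ro S T W β o)).1, B (W.f β (ro S T W β o)) s *
          ∑ g : (m : T.El β.1) → S.O (W.wmap β (ro S T W β o) m).1 → T.O m.1,
            (∏ m : T.El β.1, ∏ o' : S.O (W.wmap β (ro S T W β o) m).1,
              W.resp β (ro S T W β o) m φ o' (g m o')) *
            ∏ m : T.El β.1,
              (if g m (s (W.wmap β (ro S T W β o) m)) = t m then (1:ℝ) else 0) :=
    fun φ => swap_mul_sum _ _ _
  simp only [hswap1]
  simp only [hg]
  exact swap_mul_sum _ _ _

/-- Coefficient of the deterministic wiring with data `d` in the decomposition of `W`. -/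
def cD (W : Wiring S T) (d : DType S T) : ℝ :=
  ∑ o : (x : T.M) → W.OPre x, W.pPre o * ∏ β : T.Ctx, Qfun S T W β o (d β)

lemma cD_nonneg (W : Wiring S T) (d : DType S T) : 0 ≤ cD S T W d :=
  Finset.sum_nonneg fun o _ => mul_nonneg (W.pPre_nonneg o)
    (Finset.prod_nonneg fun β _ => Qfun_nonneg S T W β o (d β))

lemma cD_sum (W : Wiring S T) : ∑ d : DType S T, cD S T W d = 1 := by
  unfold cD
  rw [Finset.sum_comm]
  have h : ∀ o : (x : T.M) → W.OPre x,
      ∑ d : DType S T, W.pPre o * ∏ β : T.Ctx, Qfun S T W β o (d β) = W.pPre o := by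
    intro o
    rw [← Finset.mul_sum]
    have h1 : ∑ d : DType S T, ∏ β : T.Ctx, Qfun S T W β o (d β)
        = ∏ β : T.Ctx, ∑ e : EType S T β, Qfun S T W β o e :=
      pi_sum_prod (κ := fun β : T.Ctx => EType S T β) (fun β e => Qfun S T W β o e)
    rw [h1, Finset.prod_congr rfl (fun β _ => Qfun_sum S T W β o),
      Finset.prod_const_one, mul_one]
  rw [Finset.sum_congr rfl (fun o _ => h o)]
  exact W.pPre_sum

lemma preB_sum (W : Wiring S T) (β : T.Ctx) (G : ((x : T.El β.1) → W.OPre x.1) → ℝ) :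
    ∑ r : (x : T.El β.1) → W.OPre x.1, W.preB β r * G r
      = ∑ o : (x : T.M) → W.OPre x, W.pPre o * G (ro S T W β o) := by
  unfold Wiring.preB ro
  simp only [Finset.sum_mul, ite_mul, zero_mul]
  rw [Finset.sum_comm]
  refine Finset.sum_congr rfl fun o _ => ?_
  rw [Finset.sum_ite_eq Finset.univ (fun x : T.El β.1 => o x.1)
    (fun r => W.pPre o * G r)]
  simp

lemma key_sum (W : Wiring S T) (B : Behavior S) (β : T.Ctx) (t : T.JO β.1)
    (o : (x : T.M) → W.OPre x) :
    ∑ d : DType S T, (∏ β' : T.Ctx, Qfun S T W β' o (d β')) * Afun S T B β t (d β)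
      = ∑ e : EType S T β, Qfun S T W β o e * Afun S T B β t e := by
  have hprod : ∀ d : DType S T,
      (∏ β' : T.Ctx, Qfun S T W β' o (d β')) * Afun S T B β t (d β)
        = ∏ β' : T.Ctx, (Qfun S T W β' o (d β') *
            if h : β' = β then Afun S T B β t (cast (congrArg (EType S T) h) (d β'))
            else 1) := by
    intro d
    rw [Finset.prod_mul_distrib]
    congr 1
    rw [Finset.prod_eq_single β (fun b _ hb => dif_neg hb)
      (fun h => absurd (Finset.mem_univ β) h)]
    rw [dif_pos rfl]
    rfl
  rw [Finset.sum_congr rfl fun d _ => hprod d]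
  have h3 : ∑ d : DType S T, ∏ β' : T.Ctx, (Qfun S T W β' o (d β') *
        if h : β' = β then Afun S T B β t (cast (congrArg (EType S T) h) (d β')) else 1)
      = ∏ β' : T.Ctx, ∑ e : EType S T β', (Qfun S T W β' o e *
        if h : β' = β then Afun S T B β t (cast (congrArg (EType S T) h) e) else 1) :=
    pi_sum_prod (κ := fun β' : T.Ctx => EType S T β')
      (fun β' e => Qfun S T W β' o e *
        if h : β' = β then Afun S T B β t (cast (congrArg (EType S T) h) e) else 1)
  rw [h3]
  have honeb : ∀ b : T.Ctx, b ≠ β →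
      (∑ e : EType S T b, (Qfun S T W b o e *
        if h : b = β then Afun S T B β t (cast (congrArg (EType S T) h) e) else 1)) = 1 := by
    intro b hb
    have : ∀ e : EType S T b, (Qfun S T W b o e *
        if h : b = β then Afun S T B β t (cast (congrArg (EType S T) h) e) else 1)
        = Qfun S T W b o e := fun e => by rw [dif_neg hb, mul_one]
    rw [Finset.sum_congr rfl fun e _ => this e]
    exact Qfun_sum S T W b o
  rw [Finset.prod_eq_single β (fun b _ hb => honeb b hb)
    (fun h => absurd (Finset.mem_univ β) h)]
  refine Finset.sum_congr rfl fun e _ => ?_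
  rw [dif_pos rfl]
  rfl

lemma decompose (W : Wiring S T) (B : Behavior S) (β : T.Ctx) (t : T.JO β.1) :
    W.apply B β t = ∑ d : DType S T, cD S T W d * Afun S T B β t (d β) := by
  have h0 : W.apply B β t
      = ∑ r : (x : T.El β.1) → W.OPre x.1, W.preB β r *
          ∑ s : S.JO (W.f β r).1, B (W.f β r) s *
            ∑ φ : Fin (W.nPhi β r), W.q β r φ *
              ∏ m : T.El β.1, W.resp β r m φ (s (W.wmap β r m)) (t m) := by
    unfold Wiring.apply
    simp only [Finset.mul_sum, mul_assoc]
  rw [h0, preB_sum S T W β (fun r =>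
    ∑ s : S.JO (W.f β r).1, B (W.f β r) s *
      ∑ φ : Fin (W.nPhi β r), W.q β r φ *
        ∏ m : T.El β.1, W.resp β r m φ (s (W.wmap β r m)) (t m))]
  have h2 : ∀ o : (x : T.M) → W.OPre x,
      (∑ s : S.JO (W.f β (ro S T W β o)).1, B (W.f β (ro S T W β o)) s *
          ∑ φ : Fin (W.nPhi β (ro S T W β o)), W.q β (ro S T W β o) φ *
            ∏ m : T.El β.1,
              W.resp β (ro S T W β o) m φ (s (W.wmap β (ro S T W β o) m)) (t m))
        = ∑ d : DType S T, (∏ β' : T.Ctx, Qfun S T W β' o (d β')) * Afun S T B β t (d β) :=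
    fun o => by rw [key_sum S T W B β t o]; exact (QA S T W B β t o).symm
  simp only [h2]
  unfold cD
  simp only [Finset.sum_mul, Finset.mul_sum]
  rw [Finset.sum_comm]
  exact Finset.sum_congr rfl fun d _ => Finset.sum_congr rfl fun o _ => by ring

/-- Choice of a branch index from a pre-processing outcome of the mixing wiring. -/
def jOf {n : ℕ} (j₀ : Fin n) (β : T.Ctx) (r : T.El β.1 → Fin n) : Fin n :=
  if h : (Finset.univ : Finset (T.El β.1)).Nonempty then r h.choose else j₀

/-- The mixing wiring realizing a convex combination of deterministic wirings. -/
@[reducible] def mixW {n : ℕ} (j₀ : Fin n) (c : Fin n → ℝ) (hc0 : ∀ j, 0 ≤ c j)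
    (hc1 : ∑ j, c j = 1) (d : Fin n → DType S T) : Wiring S T where
  OPre _ := Fin n
  nonemptyOPre := fun _ => ⟨j₀⟩
  pPre o := ∑ j, if o = (fun _ => j) then c j else 0
  pPre_nonneg o := Finset.sum_nonneg fun j _ => by
    split
    · exact hc0 j
    · exact le_rfl
  pPre_sum := by
    rw [Finset.sum_comm]
    rw [Finset.sum_congr rfl (fun j (_ : j ∈ Finset.univ) =>
      Finset.sum_ite_eq' Finset.univ (fun _ : T.M => j) (fun _ => c j))]
    simpa using hc1
  f β r := (d (jOf T j₀ β r) β).1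
  wmap β r m := (d (jOf T j₀ β r) β).2.1 m
  nPhi _ _ := 1
  q _ _ _ := 1
  q_nonneg _ _ _ := zero_le_one
  q_sum _ _ := by simp
  resp β r m _ o u := if (d (jOf T j₀ β r) β).2.2 m o = u then 1 else 0
  resp_nonneg := by intros; split <;> norm_num
  resp_sum := by intros; simp

lemma mixW_apply {n : ℕ} (j₀ : Fin n) (c : Fin n → ℝ) (hc0 : ∀ j, 0 ≤ c j)
    (hc1 : ∑ j, c j = 1) (d : Fin n → DType S T) (B : Behavior S) (hB : IsProb S B)
    (β : T.Ctx) (t : T.JO β.1) :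
    (mixW S T j₀ c hc0 hc1 d).apply B β t = ∑ j, c j * Afun S T B β t (d j β) := by
  have hpre : ∀ r : T.El β.1 → Fin n, (mixW S T j₀ c hc0 hc1 d).preB β r
      = ∑ j, if (fun _ : T.El β.1 => j) = r then c j else 0 := by
    intro r
    unfold Wiring.preB
    simp only [mixW]
    rw [Finset.sum_congr rfl (fun o (_ : o ∈ Finset.univ) =>
      ite_sum_zero (fun j => if o = (fun _ : T.M => j) then c j else 0))]
    rw [Finset.sum_comm]
    refine Finset.sum_congr rfl fun j _ => ?_
    have hsw : ∀ o : T.M → Fin n,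
        (if (fun x : T.El β.1 => o x.1) = r then
          (if o = (fun _ : T.M => j) then c j else 0) else 0)
        = (if o = (fun _ : T.M => j) then
            (if (fun x : T.El β.1 => o x.1) = r then c j else 0) else 0) := by
      intro o
      by_cases h1 : (fun x : T.El β.1 => o x.1) = r <;>
        by_cases h2 : o = (fun _ : T.M => j) <;> simp [h1, h2]
    rw [Finset.sum_congr rfl fun o _ => hsw o]
    rw [Finset.sum_ite_eq' Finset.univ (fun _ : T.M => j)
      (fun o => if (fun x : T.El β.1 => o x.1) = r then c j else 0)]
    simp
  have h0 : (mixW S T j₀ c hc0 hc1 d).apply B β t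
      = ∑ r : T.El β.1 → Fin n, (mixW S T j₀ c hc0 hc1 d).preB β r *
          Afun S T B β t (d (jOf T j₀ β r) β) := by
    unfold Wiring.apply Afun
    refine Finset.sum_congr rfl fun r _ => ?_
    simp only [mixW, Fin.sum_univ_one, one_mul, Finset.mul_sum, mul_assoc]
  rw [h0]
  simp only [hpre]
  simp only [Finset.sum_mul, ite_mul, zero_mul]
  rw [Finset.sum_comm]
  refine Finset.sum_congr rfl fun j _ => ?_
  rw [Finset.sum_ite_eq Finset.univ (fun _ : T.El β.1 => j)
    (fun r => c j * Afun S T B β t (d (jOf T j₀ β r) β))]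
  simp only [Finset.mem_univ, if_true]
  by_cases h : (Finset.univ : Finset (T.El β.1)).Nonempty
  · have hj : jOf T j₀ β (fun _ : T.El β.1 => j) = j := by
      unfold jOf
      rw [dif_pos h]
    rw [hj]
  · haveI : IsEmpty (T.El β.1) :=
      Finset.univ_eq_empty_iff.mp (Finset.not_nonempty_iff_eq_empty.mp h)
    have hA : ∀ e : EType S T β, Afun S T B β t e = 1 := by
      intro e
      unfold Afun
      simp only [Finset.univ_eq_empty, Finset.prod_empty, mul_one]
      exact (hB e.1).2
    rw [hA, hA]

end Statement11


/-- `NCW(Υ_in → Υ_out)` is a convex polytope: there are finitely many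
deterministic noncontextual wirings `W_1, …, W_N` such that a map on behaviors is
induced by a noncontextual wiring iff it is a convex combination of the maps induced by
`W_1, …, W_N` (on nondisturbing behaviors). -/
theorem statement_11 (S T : Scenario) :
    ∃ (N : ℕ) (Ws : Fin N → Wiring S T), (∀ j, (Ws j).IsDeterministic) ∧
      ∀ F : Behavior S → Behavior T,
        (∃ W : Wiring S T, ∀ B : Behavior S, IsProb S B → IsND S B → F B = W.apply B) ↔
        (∃ c : Fin N → ℝ, (∀ j, 0 ≤ c j) ∧ (∑ j, c j = 1) ∧
          ∀ B : Behavior S, IsProb S B → IsND S B →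
            ∀ (β : T.Ctx) (t : T.JO β.1), F B β t = ∑ j, c j * (Ws j).apply B β t) := by
  classical
  refine ⟨Fintype.card (Statement11.DType S T),
    fun j => Statement11.detW S T ((Fintype.equivFin (Statement11.DType S T)).symm j),
    fun j => Statement11.detW_isDet S T _, fun F => ?_⟩
  constructor
  · rintro ⟨W, hW⟩
    refine ⟨fun j => Statement11.cD S T W ((Fintype.equivFin (Statement11.DType S T)).symm j),
      fun j => Statement11.cD_nonneg S T W _, ?_, ?_⟩
    · rw [Equiv.sum_comp ((Fintype.equivFin (Statement11.DType S T)).symm)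
        (Statement11.cD S T W)]
      exact Statement11.cD_sum S T W
    · intro B hP hND β t
      rw [hW B hP hND, Statement11.decompose S T W B β t]
      rw [← Equiv.sum_comp ((Fintype.equivFin (Statement11.DType S T)).symm)
        (fun d => Statement11.cD S T W d * Statement11.Afun S T B β t (d β))]
      exact Finset.sum_congr rfl fun j _ => by
        rw [Statement11.detW_apply S T ((Fintype.equivFin (Statement11.DType S T)).symm j) B β t]
  · rintro ⟨c, hc0, hc1, hF⟩
    have hn : 0 < Fintype.card (Statement11.DType S T) := by
      rcases Nat.eq_zero_or_pos (Fintype.card (Statement11.DType S T)) with h | h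
      · exfalso
        have h2 : (1 : ℝ) = 0 := by
          rw [← hc1]
          apply Finset.sum_eq_zero
          intro j _
          exact absurd j.isLt (by omega)
        norm_num at h2
      · exact h
    refine ⟨Statement11.mixW S T ⟨0, hn⟩ c hc0 hc1
      (fun j => (Fintype.equivFin (Statement11.DType S T)).symm j), ?_⟩
    intro B hP hND
    funext β t
    rw [hF B hP hND β t,
      Statement11.mixW_apply S T ⟨0, hn⟩ c hc0 hc1
        (fun j => (Fintype.equivFin (Statement11.DType S T)).symm j) B hP β t]
    exact Finset.sum_congr rfl fun j _ => by
      rw [Statement11.detW_apply S T ((Fintype.equivFin (Statement11.DType S T)).symm j) B β t]
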